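/- For every γ > 0 and every integer n ≥ 1 the following holds with β = 2γ: there exist a dimension d, a quadratic loss function f(w; (x, y)) = (1/2)wᵀAw − y·xᵀw which as a function of w is γ-strongly-convex and β-smooth for every data point, twin datasets S, S' of size n, and a data point z, such that for every T ≥ 1, coupled uniform-sampling SGD with constant step size α = 1/(2β) initialized at w_0 = w_0' = 0 satisfies E_A‖Δ_T‖ ≥ 1/(16γn) and E_A|f(w_T; z) − f(w_T'; z)| ≥ 1/(16γn); in particular the uniform stability satisfies ε_stab ≥ 1/(16γn). -/

import Mathlib

open Finset
open scoped RealInnerProductSpace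

noncomputable section

/-- SGD iterates: `sgd f α z w0 t` is the parameter after `t` steps, where `z s` is the
data point used at step `s` and `α s` the step size of step `s` (steps are numbered from 1). -/
def sgd {d : ℕ} {Z : Type*} (f : EuclideanSpace ℝ (Fin d) → Z → ℝ) (α : ℕ → ℝ) (z : ℕ → Z)
    (w0 : EuclideanSpace ℝ (Fin d)) : ℕ → EuclideanSpace ℝ (Fin d)
  | 0 => w0
  | t + 1 => sgd f α z w0 t - α (t + 1) • gradient (fun w => f w (z (t + 1))) (sgd f α z w0 t)

/-- Divergence `Δ_t = w_t - w_t'` of coupled SGD on the datasets `S, S'` with the common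
index sequence `idx` and common initialization `w0`. -/
def sgdDelta {d n : ℕ} {Z : Type*} (f : EuclideanSpace ℝ (Fin d) → Z → ℝ) (α : ℕ → ℝ)
    (S S' : Fin n → Z) (idx : ℕ → Fin n) (w0 : EuclideanSpace ℝ (Fin d)) (t : ℕ) :
    EuclideanSpace ℝ (Fin d) :=
  sgd f α (fun s => S (idx s)) w0 t - sgd f α (fun s => S' (idx s)) w0 t

/-- Extend a finite index tuple (steps `1,…,T`) to an index sequence `ℕ → Fin n`. -/
def extSeq {n : ℕ} (hn : 0 < n) {T : ℕ} (ω : Fin T → Fin n) : ℕ → Fin n :=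
  fun t => if h : 0 < t ∧ t ≤ T then ω ⟨t - 1, by omega⟩ else ⟨0, hn⟩

/-- Expectation over uniform-sampling SGD randomness: the indices `i_1,…,i_T` are i.i.d.
uniform on `{1,…,n}` and `g` depends on the index sequence. -/
def expA {n : ℕ} (hn : 0 < n) (T : ℕ) (g : (ℕ → Fin n) → ℝ) : ℝ :=
  (∑ ω : Fin T → Fin n, g (extSeq hn ω)) / (n : ℝ) ^ T



abbrev E1 := EuclideanSpace ℝ (Fin 1)

def ee : E1 := EuclideanSpace.single 0 1

lemma inner_ee : ⟪ee, ee⟫ = (1:ℝ) := by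
  simp [ee, EuclideanSpace.inner_single_left, EuclideanSpace.single_apply]

lemma inner_ee_smul (r : ℝ) : ⟪ee, r • ee⟫ = r := by
  rw [real_inner_smul_right, inner_ee]; ring

lemma norm_smul_ee (r : ℝ) : ‖r • ee‖ = |r| := by
  rw [norm_smul]
  simp [ee, EuclideanSpace.norm_single]

lemma grad_quad (γ y : ℝ) (x₀ v : E1) :
    gradient (fun w : E1 => (1/2) * ⟪w, γ • w⟫ - y * ⟪x₀, w⟫) v = γ • v - y • x₀ := by
  have hfun : (fun w : E1 => (1/2) * ⟪w, γ • w⟫ - y * ⟪x₀, w⟫)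
      = fun w : E1 => (γ/2) * ⟪w, w⟫ - y * ⟪x₀, w⟫ := by
    funext w
    rw [real_inner_smul_right]; ring
  rw [hfun]
  apply HasGradientAt.gradient
  rw [hasGradientAt_iff_hasFDerivAt]
  have h1 : HasFDerivAt (fun w : E1 => ⟪w, w⟫)
      ((fderivInnerCLM ℝ (v, v)).comp
        ((ContinuousLinearMap.id ℝ E1).prod (ContinuousLinearMap.id ℝ E1))) v :=
    (hasFDerivAt_id v).inner ℝ (hasFDerivAt_id v)
  have h2 : HasFDerivAt (fun w : E1 => ⟪x₀, w⟫) (innerSL ℝ x₀) v := (innerSL ℝ x₀).hasFDerivAt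
  have h := (h1.const_mul (γ/2)).sub (h2.const_mul y)
  refine h.congr_fderiv ?_
  ext u
  simp [InnerProductSpace.toDual_apply_apply, fderivInnerCLM_apply, real_inner_smul_left,
    inner_sub_left]
  rw [real_inner_comm v u]; ring

/-- the scalar SGD recursion -/
def sA (γ : ℝ) (c : ℕ → ℝ) : ℕ → ℝ
  | 0 => 0
  | t + 1 => (3/4) * sA γ c t + (1/(4*γ)) * c (t+1)

lemma sA_nonneg {γ : ℝ} (hγ : 0 < γ) {c : ℕ → ℝ} (hc : ∀ s, 0 ≤ c s) (t : ℕ) :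
    0 ≤ sA γ c t := by
  induction t with
  | zero => simp [sA]
  | succ t ih =>
    have h4 : (0:ℝ) < 1/(4*γ) := by positivity
    have := hc (t+1)
    simp only [sA]
    nlinarith

lemma sA_last {γ : ℝ} (hγ : 0 < γ) {c : ℕ → ℝ} (hc : ∀ s, 0 ≤ c s) (t : ℕ)
    (h : c (t+1) = 1) : 1/(4*γ) ≤ sA γ c (t+1) := by
  have := sA_nonneg hγ hc t
  simp only [sA, h]
  nlinarith

lemma sA_zero (γ : ℝ) (t : ℕ) : sA γ (fun _ => 0) t = 0 := by
  induction t with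
  | zero => rfl
  | succ t ih => simp [sA, ih]

def AA (γ : ℝ) : E1 →L[ℝ] E1 := γ • ContinuousLinearMap.id ℝ E1

def ff (γ : ℝ) : E1 → E1 × ℝ → ℝ := fun w z => (1 / 2) * ⟪w, AA γ w⟫ - z.2 * ⟪z.1, w⟫

lemma AA_apply (γ : ℝ) (w : E1) : AA γ w = γ • w := rfl

lemma grad_ff (γ : ℝ) (z : E1 × ℝ) (v : E1) :
    gradient (fun w => ff γ w z) v = γ • v - z.2 • z.1 := by
  have h : (fun w => ff γ w z) = fun w : E1 => (1/2) * ⟪w, γ • w⟫ - z.2 * ⟪z.1, w⟫ := rfl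
  rw [h, grad_quad]

lemma sgd_form {γ : ℝ} (hγ : 0 < γ) (c : ℕ → ℝ) (t : ℕ) :
    sgd (ff γ) (fun _ => 1 / (2 * (2 * γ))) (fun s => (ee, c s)) 0 t = sA γ c t • ee := by
  induction t with
  | zero => simp [sgd, sA]
  | succ t ih =>
    rw [sgd, ih, grad_ff]
    have hγ' : γ ≠ 0 := ne_of_gt hγ
    simp only [smul_smul]
    rw [smul_sub, smul_smul, smul_smul, ← sub_smul, ← sub_smul, sA]
    congr 1
    field_simp
    ring

lemma ff_smul_ee (γ r b : ℝ) : ff γ (r • ee) (ee, b) = γ/2 * r^2 - b * r := by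
  simp only [ff, AA_apply]
  rw [smul_smul, real_inner_smul_left, inner_ee_smul, inner_ee_smul]
  ring

lemma ff_zero (γ : ℝ) (z : E1 × ℝ) : ff γ 0 z = 0 := by
  simp [ff]

lemma card_fix {n T : ℕ} (j : Fin T) (i : Fin n) :
    ((univ : Finset (Fin T → Fin n)).filter (fun ω => ω j = i)).card = n ^ (T - 1) := by
  classical
  rw [Finset.card_filter]
  have h1 : ∑ ω : Fin T → Fin n, (if ω j = i then 1 else 0)
      = ∑ p : Fin n × ({k : Fin T // k ≠ j} → Fin n), (if p.1 = i then 1 else 0) :=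
    Fintype.sum_equiv (Equiv.funSplitAt j (Fin n)) _ _ (fun ω => by simp)
  rw [h1, Fintype.sum_prod_type]
  have h2 : Fintype.card {k : Fin T // k ≠ j} = T - 1 := by
    simp [Fintype.card_subtype_compl]
  simp [apply_ite Finset.card, Finset.sum_ite_eq', Fintype.card_fun, h2]

lemma expA_ge {n : ℕ} (hn : 0 < n) {T : ℕ} (hT : 1 ≤ T) (g : (ℕ → Fin n) → ℝ) (i : Fin n)
    {a : ℝ} (ha : 0 ≤ a)
    (h0 : ∀ ω : Fin T → Fin n, 0 ≤ g (extSeq hn ω))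
    (h1 : ∀ ω : Fin T → Fin n, extSeq hn ω T = i → a ≤ g (extSeq hn ω)) :
    a / n ≤ expA hn T g := by
  classical
  set j : Fin T := ⟨T - 1, by omega⟩ with hj
  have hext : ∀ ω : Fin T → Fin n, extSeq hn ω T = ω j := by
    intro ω
    have hc : 0 < T ∧ T ≤ T := ⟨hT, le_refl T⟩
    simp only [extSeq, dif_pos hc]
    rfl
  set F := (univ : Finset (Fin T → Fin n)).filter (fun ω => ω j = i) with hF
  have hcard : (F.card : ℝ) = (n : ℝ) ^ (T - 1) := by
    rw [hF, card_fix j i]; push_cast; ring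
  have h2 : a * (n : ℝ) ^ (T - 1) ≤ ∑ ω ∈ F, g (extSeq hn ω) := by
    calc a * (n : ℝ) ^ (T - 1) = F.card • a := by
          rw [nsmul_eq_mul, hcard]; ring
      _ = ∑ _ω ∈ F, a := by rw [Finset.sum_const]
      _ ≤ ∑ ω ∈ F, g (extSeq hn ω) := by
          apply Finset.sum_le_sum
          intro ω hω
          exact h1 ω (by rw [hext ω]; exact (Finset.mem_filter.mp hω).2)
  have h3 : ∑ ω ∈ F, g (extSeq hn ω) ≤ ∑ ω : Fin T → Fin n, g (extSeq hn ω) :=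
    Finset.sum_le_sum_of_subset_of_nonneg (Finset.subset_univ F) (fun ω _ _ => h0 ω)
  have hnR : (0:ℝ) < n := by exact_mod_cast hn
  rw [expA, le_div_iff₀ (by positivity)]
  have hpow : (n : ℝ) ^ T = (n : ℝ) ^ (T - 1) * n := by
    rw [← pow_succ]; congr 1; omega
  calc a / n * (n : ℝ) ^ T = a * (n : ℝ) ^ (T - 1) := by
        rw [hpow]; field_simp
    _ ≤ _ := le_trans h2 h3


open Classical in
/-- Conditional expectation over uniform-sampling SGD randomness given an event `E` of the
index sequence. -/
def expACond {n : ℕ} (hn : 0 < n) (T : ℕ) (g : (ℕ → Fin n) → ℝ)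
    (E : (ℕ → Fin n) → Prop) : ℝ :=
  (∑ ω ∈ univ.filter (fun ω : Fin T → Fin n => E (extSeq hn ω)), g (extSeq hn ω)) /
    ((univ.filter (fun ω : Fin T → Fin n => E (extSeq hn ω))).card : ℝ)

/-- tightness of the O(1/n) stability bound for strongly-convex smooth losses. -/
theorem statement4 (γ : ℝ) (hγ : 0 < γ) (n : ℕ) (hn : 0 < n) :
    ∃ (d : ℕ) (A : EuclideanSpace ℝ (Fin d) →L[ℝ] EuclideanSpace ℝ (Fin d))
      (f : EuclideanSpace ℝ (Fin d) → EuclideanSpace ℝ (Fin d) × ℝ → ℝ)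
      (S S' : Fin n → EuclideanSpace ℝ (Fin d) × ℝ) (i : Fin n)
      (z : EuclideanSpace ℝ (Fin d) × ℝ),
      -- A is symmetric and f is the quadratic loss associated to A
      (∀ u v, ⟪A u, v⟫ = ⟪u, A v⟫) ∧
      (∀ w z, f w z = (1 / 2) * ⟪w, A w⟫ - z.2 * ⟪z.1, w⟫) ∧
      -- f is γ-strongly-convex and β-smooth in w (with β = 2γ), for every data point
      (∀ z u v, f u z ≥ f v z + ⟪gradient (fun w => f w z) v, u - v⟫ + γ / 2 * ‖u - v‖ ^ 2) ∧
      (∀ z u v, ‖gradient (fun w => f w z) u - gradient (fun w => f w z) v‖ ≤ (2 * γ) * ‖u - v‖) ∧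
      -- S, S' are twin datasets differing exactly at index i
      (∀ j, j ≠ i → S j = S' j) ∧ S i ≠ S' i ∧
      -- SGD with constant step size α = 1/(2β) = 1/(4γ) from w₀ = 0
      (∀ T : ℕ, 1 ≤ T →
        expA hn T (fun idx => ‖sgdDelta f (fun _ => 1 / (2 * (2 * γ))) S S' idx 0 T‖) ≥
          1 / (16 * γ * n) ∧
        expA hn T (fun idx =>
            |f (sgd f (fun _ => 1 / (2 * (2 * γ))) (fun s => S (idx s)) 0 T) z -
              f (sgd f (fun _ => 1 / (2 * (2 * γ))) (fun s => S' (idx s)) 0 T) z|) ≥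
          1 / (16 * γ * n) ∧
        -- in particular, uniform stability is at least 1/(16γn)
        (∀ ε : ℝ,
          (∀ (Sa Sb : Fin n → EuclideanSpace ℝ (Fin d) × ℝ) (ia : Fin n),
              (∀ j, j ≠ ia → Sa j = Sb j) →
              ∀ za, expA hn T (fun idx =>
                |f (sgd f (fun _ => 1 / (2 * (2 * γ))) (fun s => Sa (idx s)) 0 T) za -
                  f (sgd f (fun _ => 1 / (2 * (2 * γ))) (fun s => Sb (idx s)) 0 T) za|) ≤ ε) →
            1 / (16 * γ * n) ≤ ε)) := by
  classical
  set i : Fin n := ⟨0, hn⟩ with hi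
  refine ⟨1, AA γ, ff γ, fun _ => (ee, 0), fun j => (ee, if j = i then 1 else 0), i,
    (ee, -1), ?_, fun w z => rfl, ?_, ?_, ?_, ?_, ?_⟩
  · intro u v
    rw [AA_apply, AA_apply, real_inner_smul_left, real_inner_smul_right]
  · -- strong convexity
    intro z u v
    rw [grad_ff]
    show (1/2) * ⟪u, γ • u⟫ - z.2 * ⟪z.1, u⟫ ≥ _
    have hn2 : ‖u - v‖^2 = ⟪u-v, u-v⟫ := (real_inner_self_eq_norm_sq _).symm
    rw [ge_iff_le, hn2]
    show ((1/2) * ⟪v, γ • v⟫ - z.2 * ⟪z.1, v⟫) + _ + _ ≤ _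
    simp only [real_inner_smul_right, real_inner_smul_left, inner_sub_left, inner_sub_right]
    rw [real_inner_comm v u]
    nlinarith [real_inner_comm u v]
  · -- smoothness
    intro z u v
    rw [grad_ff, grad_ff]
    have h : (γ • u - z.2 • z.1) - (γ • v - z.2 • z.1) = γ • (u - v) := by module
    rw [h, norm_smul, Real.norm_eq_abs, abs_of_pos hγ]
    nlinarith [norm_nonneg (u - v)]
  · intro j hj
    simp [if_neg hj]
  · intro h
    have := congrArg Prod.snd h
    simp at this
  · -- the quantitative clauses
    intro T hT
    obtain ⟨t, rfl⟩ : ∃ t, T = t + 1 := ⟨T - 1, by omega⟩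
    set T := t + 1
    set α : ℕ → ℝ := fun _ => 1 / (2 * (2 * γ)) with hα
    -- closed forms
    have hwS : ∀ idx : ℕ → Fin n,
        sgd (ff γ) α (fun s => ((ee, 0) : E1 × ℝ)) 0 T = (0 : E1) := by
      intro idx
      have h := sgd_form hγ (fun _ => 0) T
      rw [show (fun s : ℕ => ((ee, 0) : E1 × ℝ)) = (fun s => (ee, (fun _ : ℕ => (0:ℝ)) s))
        from rfl] at h ⊢
      rw [h, sA_zero, zero_smul]
    have hwS' : ∀ idx : ℕ → Fin n,
        sgd (ff γ) α (fun s => ((ee, if idx s = i then (1:ℝ) else 0) : E1 × ℝ)) 0 T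
          = sA γ (fun s => if idx s = i then (1:ℝ) else 0) T • ee := by
      intro idx
      exact sgd_form hγ (fun s => if idx s = i then (1:ℝ) else 0) T
    have hcnn : ∀ idx : ℕ → Fin n, ∀ s, (0:ℝ) ≤ if idx s = i then (1:ℝ) else 0 := by
      intro idx s; split <;> norm_num
    have hsnn : ∀ idx : ℕ → Fin n, 0 ≤ sA γ (fun s => if idx s = i then (1:ℝ) else 0) T :=
      fun idx => sA_nonneg hγ (hcnn idx) T
    have hslast : ∀ idx : ℕ → Fin n, idx T = i →
        1/(4*γ) ≤ sA γ (fun s => if idx s = i then (1:ℝ) else 0) T := by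
      intro idx h
      exact sA_last hγ (hcnn idx) t (by simp [show idx (t + 1) = i from h])
    have hnR : (1:ℝ) ≤ n := by exact_mod_cast hn
    have hfinal : 1 / (16 * γ * n) ≤ (1/(4*γ)) / n := by
      rw [div_div]
      apply one_div_le_one_div_of_le (by positivity)
      nlinarith
    have hbound2 : 1 / (16 * γ * ↑n) ≤ expA hn T (fun idx =>
        |ff γ (sgd (ff γ) α (fun s => ((ee, 0) : E1 × ℝ)) 0 T) (ee, -1) -
          ff γ (sgd (ff γ) α (fun s => ((ee, if idx s = i then (1:ℝ) else 0) : E1 × ℝ)) 0 T)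
            (ee, -1)|) := by
      refine le_trans hfinal (expA_ge hn hT _ i (by positivity) (fun ω => abs_nonneg _) ?_)
      intro ω hω
      set r := sA γ (fun s => if extSeq hn ω s = i then (1:ℝ) else 0) T with hr
      have h1 := hwS (extSeq hn ω)
      have h2 := hwS' (extSeq hn ω)
      rw [h1, h2, ff_zero, ff_smul_ee, ← hr]
      have hrnn := hsnn (extSeq hn ω)
      have hrge := hslast (extSeq hn ω) hω
      rw [← hr] at hrnn hrge
      rw [abs_of_nonpos (by nlinarith)]
      nlinarith
    refine ⟨?_, ?_, ?_⟩
    · rw [ge_iff_le]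
      refine le_trans hfinal (expA_ge hn hT _ i (by positivity) (fun ω => norm_nonneg _) ?_)
      intro ω hω
      show _ ≤ ‖sgdDelta (ff γ) α _ _ (extSeq hn ω) 0 T‖
      rw [sgdDelta]
      set r := sA γ (fun s => if extSeq hn ω s = i then (1:ℝ) else 0) T with hr
      have h1 := hwS (extSeq hn ω)
      have h2 := hwS' (extSeq hn ω)
      rw [h1, h2, ← hr, zero_sub, norm_neg, norm_smul_ee]
      have hrnn := hsnn (extSeq hn ω); rw [← hr] at hrnn
      have hrge := hslast (extSeq hn ω) hω; rw [← hr] at hrge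
      rwa [abs_of_nonneg hrnn]
    · exact hbound2
    · intro ε hε
      refine le_trans hbound2 ?_
      have := hε (fun _ => (ee, 0)) (fun j => (ee, if j = i then 1 else 0)) i
        (fun j hj => by simp [if_neg hj]) (ee, -1)
      exact this
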